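/- For p ∈ (0, 1/2), the ratio (∫_0^1 ((1/p)(u^{-p}−1))² du) / (∫_0^1 u^{-2p} du) equals 2/(1-p), which is strictly less than 4 and tends to 4 as p → 1/2 from below. -/

import Mathlib

open Filter intervalIntegral

lemma denom_eq {p : ℝ} (hp : p ∈ Set.Ioo (0:ℝ) (1/2)) :
    (∫ u in (0:ℝ)..1, ((u : ℝ) ^ (-p))^2) = 1 / (1 - 2*p) := by
  obtain ⟨h0, h2⟩ := hp
  have hcongr : ∀ x ∈ Set.uIcc (0:ℝ) 1, ((x : ℝ) ^ (-p))^2 = x ^ (-(2*p)) := by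
    intro x hx
    rw [Set.uIcc_of_le (by norm_num)] at hx
    have hx0 : (0:ℝ) ≤ x := hx.1
    rw [← Real.rpow_natCast (x ^ (-p)) 2, ← Real.rpow_mul hx0]
    norm_num
    ring_nf
  rw [intervalIntegral.integral_congr hcongr, integral_rpow (Or.inl (by linarith)),
    Real.one_rpow, Real.zero_rpow (by linarith)]
  ring_nf

lemma num_eq {p : ℝ} (hp : p ∈ Set.Ioo (0:ℝ) (1/2)) :
    (∫ u in (0:ℝ)..1, ((1/p) * ((u : ℝ) ^ (-p) - 1))^2)
      = (1/p)^2 * (1/(1-2*p) - 2/(1-p) + 1) := by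
  obtain ⟨h0, h2⟩ := hp
  have hcongr : ∀ x ∈ Set.uIcc (0:ℝ) 1,
      ((1/p) * ((x : ℝ) ^ (-p) - 1))^2
        = (1/p)^2 * (x ^ (-(2*p)) - 2 * x ^ (-p) + 1) := by
    intro x hx
    rw [Set.uIcc_of_le (by norm_num)] at hx
    have hx0 : (0:ℝ) ≤ x := hx.1
    have hsq : ((x : ℝ) ^ (-p))^2 = x ^ (-(2*p)) := by
      rw [← Real.rpow_natCast (x ^ (-p)) 2, ← Real.rpow_mul hx0]
      norm_num; ring_nf
    rw [← hsq]; ring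
  rw [intervalIntegral.integral_congr hcongr]
  have i1 : IntervalIntegrable (fun x : ℝ => x ^ (-(2*p))) MeasureTheory.volume 0 1 :=
    intervalIntegral.intervalIntegrable_rpow' (by linarith)
  have i2 : IntervalIntegrable (fun x : ℝ => x ^ (-p)) MeasureTheory.volume 0 1 :=
    intervalIntegral.intervalIntegrable_rpow' (by linarith)
  have i2' : IntervalIntegrable (fun x : ℝ => 2 * x ^ (-p)) MeasureTheory.volume 0 1 :=
    i2.const_mul 2
  rw [intervalIntegral.integral_const_mul]
  rw [intervalIntegral.integral_add (i1.sub i2') intervalIntegrable_const,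
    intervalIntegral.integral_sub i1 i2', intervalIntegral.integral_const_mul,
    integral_rpow (Or.inl (by linarith)), integral_rpow (Or.inl (by linarith)),
    Real.one_rpow, Real.one_rpow, Real.zero_rpow (by linarith), Real.zero_rpow (by linarith)]
  simp
  ring_nf
  exact Or.inl trivial

lemma ratio_eq {p : ℝ} (hp : p ∈ Set.Ioo (0:ℝ) (1/2)) :
    (∫ u in (0:ℝ)..1, ((1/p) * ((u : ℝ) ^ (-p) - 1))^2) /
      (∫ u in (0:ℝ)..1, ((u : ℝ) ^ (-p))^2) = 2 / (1 - p) := by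
  obtain ⟨h0, h2⟩ := hp
  rw [num_eq ⟨h0, h2⟩, denom_eq ⟨h0, h2⟩]
  have hp1 : (1:ℝ) - 2*p ≠ 0 := by linarith
  have hp2 : (1:ℝ) - p ≠ 0 := by linarith
  have hp3 : (1:ℝ) - p * 2 ≠ 0 := by linarith
  field_simp
  ring

theorem lstar_ratio_tight :
    (∀ p ∈ Set.Ioo (0:ℝ) (1/2),
      (∫ u in (0:ℝ)..1, ((1/p) * ((u : ℝ) ^ (-p) - 1))^2) /
        (∫ u in (0:ℝ)..1, ((u : ℝ) ^ (-p))^2) = 2 / (1 - p) ∧ 2 / (1 - p) < 4) ∧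
    Filter.Tendsto
      (fun p : ℝ => (∫ u in (0:ℝ)..1, ((1/p) * ((u : ℝ) ^ (-p) - 1))^2) /
        (∫ u in (0:ℝ)..1, ((u : ℝ) ^ (-p))^2))
      (nhdsWithin (1/2) (Set.Iio (1/2))) (nhds 4) := by
  constructor
  · intro p hp
    refine ⟨ratio_eq hp, ?_⟩
    have h1 : (0:ℝ) < 1 - p := by linarith [hp.2]
    rw [div_lt_iff₀ h1]
    linarith [hp.2]
  · have heq : (fun p : ℝ => (∫ u in (0:ℝ)..1, ((1/p) * ((u : ℝ) ^ (-p) - 1))^2) /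
        (∫ u in (0:ℝ)..1, ((u : ℝ) ^ (-p))^2)) =ᶠ[nhdsWithin (1/2) (Set.Iio (1/2))]
        (fun p => 2 / (1 - p)) := by
      have hmem : Set.Ioo (0:ℝ) (1/2) ∈ nhdsWithin (1/2 : ℝ) (Set.Iio (1/2)) := by
        rw [mem_nhdsWithin]
        exact ⟨Set.Ioi 0, isOpen_Ioi, by norm_num, by
          rintro x ⟨hx1, hx2⟩; exact ⟨hx1, hx2⟩⟩
      filter_upwards [hmem] with p hp
      exact ratio_eq hp
    refine Tendsto.congr' heq.symm ?_
    have hc : ContinuousAt (fun p : ℝ => 2 / (1 - p)) (1/2) := by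
      apply ContinuousAt.div continuousAt_const (by fun_prop)
      norm_num
    have := hc.tendsto.mono_left (nhdsWithin_le_nhds (s := Set.Iio (1/2 : ℝ)))
    convert this using 2
    norm_num
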